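/- Let T be a closed operator and N a normal operator on H, with A the block operator (x,y) ↦ (0, Tx) on dom(T) ⊕ H and Ñ = diag(N, N*) on dom(N) ⊕ dom(N*). Then TN ⊆ NT if and only if AÑ ⊆ Ñ*A. -/

import Mathlib

open LinearPMap

/-- Composition of partial linear maps: `T.pcomp S` is "first `S`, then `T`", with
domain `{x ∈ dom S : S x ∈ dom T}`. -/
noncomputable def LinearPMap.pcomp {H : Type*} [NormedAddCommGroup H] [InnerProductSpace ℂ H]
    (T S : H →ₗ.[ℂ] H) : H →ₗ.[ℂ] H where
  domain := (Submodule.comap S.toFun T.domain).map S.domain.subtype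
  toFun := T.toFun ∘ₗ (S.toFun.restrict fun _ hx => hx) ∘ₗ
    (Submodule.equivMapOfInjective S.domain.subtype S.domain.injective_subtype
      (Submodule.comap S.toFun T.domain)).symm.toLinearMap

/-- A densely defined closed operator `N` on a complex Hilbert space is normal if
`N* N = N N*` (as partial linear maps). -/
noncomputable def LinearPMap.IsNormalOp {H : Type*} [NormedAddCommGroup H]
    [InnerProductSpace ℂ H] [CompleteSpace H] (N : H →ₗ.[ℂ] H) : Prop :=
  Dense (N.domain : Set H) ∧ N.IsClosed ∧ N.adjoint.pcomp N = N.pcomp N.adjoint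

/-- A bounded everywhere-defined operator viewed as a partial linear map. -/
noncomputable def ContinuousLinearMap.toPMapTop {H : Type*} [NormedAddCommGroup H]
    [InnerProductSpace ℂ H] (A : H →L[ℂ] H) : H →ₗ.[ℂ] H :=
  (A : H →ₗ[ℂ] H).toPMap ⊤

/-- The block diagonal operator `diag(N, M)` on `H ⊕ H` with domain `dom N ⊕ dom M`,
acting by `(x, y) ↦ (N x, M y)`. -/
noncomputable def pdiag {H : Type*} [NormedAddCommGroup H] [InnerProductSpace ℂ H]
    (N M : H →ₗ.[ℂ] H) : WithLp 2 (H × H) →ₗ.[ℂ] WithLp 2 (H × H) where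
  domain := (N.domain.prod M.domain).comap (WithLp.linearEquiv 2 ℂ (H × H)).toLinearMap
  toFun := (WithLp.linearEquiv 2 ℂ (H × H)).symm.toLinearMap ∘ₗ
    ((N.toFun ∘ₗ (LinearMap.restrict (LinearMap.fst ℂ H H ∘ₗ (WithLp.linearEquiv 2 ℂ (H × H)).toLinearMap)
        (p := (N.domain.prod M.domain).comap (WithLp.linearEquiv 2 ℂ (H × H)).toLinearMap)
        (q := N.domain) fun _ hx => hx.1)).prod
      (M.toFun ∘ₗ (LinearMap.restrict (LinearMap.snd ℂ H H ∘ₗ (WithLp.linearEquiv 2 ℂ (H × H)).toLinearMap)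
        (p := (N.domain.prod M.domain).comap (WithLp.linearEquiv 2 ℂ (H × H)).toLinearMap)
        (q := M.domain) fun _ hx => hx.2)))

/-- The block operator `(x, y) ↦ (0, T x)` on `H ⊕ H` (the operator matrix with `T` in the
lower-left corner and zeros elsewhere), with domain `dom T ⊕ H`. -/
noncomputable def pblockLL {H : Type*} [NormedAddCommGroup H] [InnerProductSpace ℂ H]
    (T : H →ₗ.[ℂ] H) : WithLp 2 (H × H) →ₗ.[ℂ] WithLp 2 (H × H) where
  domain := (T.domain.prod ⊤).comap (WithLp.linearEquiv 2 ℂ (H × H)).toLinearMap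
  toFun := (WithLp.linearEquiv 2 ℂ (H × H)).symm.toLinearMap ∘ₗ
    ((0 : _ →ₗ[ℂ] H).prod
      (T.toFun ∘ₗ (LinearMap.restrict (LinearMap.fst ℂ H H ∘ₗ (WithLp.linearEquiv 2 ℂ (H × H)).toLinearMap)
        (p := (T.domain.prod ⊤).comap (WithLp.linearEquiv 2 ℂ (H × H)).toLinearMap)
        (q := T.domain) fun _ hx => hx.1)))

/-- The block operator `(x, y) ↦ (S y, 0)` on `H ⊕ H` (the operator matrix with `S` in the
upper-right corner and zeros elsewhere), with domain `H ⊕ dom S`. -/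
noncomputable def pblockUR {H : Type*} [NormedAddCommGroup H] [InnerProductSpace ℂ H]
    (S : H →ₗ.[ℂ] H) : WithLp 2 (H × H) →ₗ.[ℂ] WithLp 2 (H × H) where
  domain := ((⊤ : Submodule ℂ H).prod S.domain).comap (WithLp.linearEquiv 2 ℂ (H × H)).toLinearMap
  toFun := (WithLp.linearEquiv 2 ℂ (H × H)).symm.toLinearMap ∘ₗ
    ((S.toFun ∘ₗ (LinearMap.restrict (LinearMap.snd ℂ H H ∘ₗ (WithLp.linearEquiv 2 ℂ (H × H)).toLinearMap)
        (p := ((⊤ : Submodule ℂ H).prod S.domain).comap (WithLp.linearEquiv 2 ℂ (H × H)).toLinearMap)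
        (q := S.domain) fun _ hx => hx.2)).prod 0)

variable {H : Type*} [NormedAddCommGroup H] [InnerProductSpace ℂ H] [CompleteSpace H]

set_option linter.unusedSectionVars false

section Pcomp
variable {H : Type*} [NormedAddCommGroup H] [InnerProductSpace ℂ H]

theorem pcomp_domain_mem {T S : H →ₗ.[ℂ] H} {x : H} :
    x ∈ (T.pcomp S).domain ↔ ∃ hx : x ∈ S.domain, S ⟨x, hx⟩ ∈ T.domain := by
  constructor
  · rintro ⟨y, hy, rfl⟩
    exact ⟨y.2, hy⟩
  · rintro ⟨hx, hSx⟩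
    exact ⟨⟨x, hx⟩, hSx, rfl⟩

theorem pcomp_apply {T S : H →ₗ.[ℂ] H} {x : H} (hx : x ∈ S.domain)
    (hSx : S ⟨x, hx⟩ ∈ T.domain) (hmem : x ∈ (T.pcomp S).domain) :
    (T.pcomp S) ⟨x, hmem⟩ = T ⟨S ⟨x, hx⟩, hSx⟩ := by
  have he : (Submodule.equivMapOfInjective S.domain.subtype S.domain.injective_subtype
      (Submodule.comap S.toFun T.domain)).symm ⟨x, hmem⟩
      = ⟨⟨x, hx⟩, hSx⟩ := by
    rw [LinearEquiv.symm_apply_eq]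
    refine Subtype.ext ?_
    rw [Submodule.coe_equivMapOfInjective_apply]
    rfl
  show T.toFun ((S.toFun.restrict fun _ hx => hx)
      ((Submodule.equivMapOfInjective S.domain.subtype S.domain.injective_subtype
        (Submodule.comap S.toFun T.domain)).symm ⟨x, hmem⟩)) = _
  rw [he]
  rfl
end Pcomp

section Blocks
variable {H : Type*} [NormedAddCommGroup H] [InnerProductSpace ℂ H]

theorem pdiag_domain_mem {N M : H →ₗ.[ℂ] H} {z : WithLp 2 (H × H)} :
    z ∈ (pdiag N M).domain ↔
      (WithLp.equiv 2 (H × H) z).1 ∈ N.domain ∧ (WithLp.equiv 2 (H × H) z).2 ∈ M.domain :=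
  Iff.rfl

theorem pdiag_apply {N M : H →ₗ.[ℂ] H} {z : WithLp 2 (H × H)} (hz : z ∈ (pdiag N M).domain) :
    (pdiag N M) ⟨z, hz⟩ = (WithLp.equiv 2 (H × H)).symm
      (N ⟨(WithLp.equiv 2 (H × H) z).1, hz.1⟩, M ⟨(WithLp.equiv 2 (H × H) z).2, hz.2⟩) :=
  rfl

theorem pblockLL_domain_mem {T : H →ₗ.[ℂ] H} {z : WithLp 2 (H × H)} :
    z ∈ (pblockLL T).domain ↔ (WithLp.equiv 2 (H × H) z).1 ∈ T.domain :=
  ⟨fun h => h.1, fun h => ⟨h, trivial⟩⟩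

theorem pblockLL_apply {T : H →ₗ.[ℂ] H} {z : WithLp 2 (H × H)} (hz : z ∈ (pblockLL T).domain) :
    (pblockLL T) ⟨z, hz⟩ = (WithLp.equiv 2 (H × H)).symm
      (0, T ⟨(WithLp.equiv 2 (H × H) z).1, hz.1⟩) :=
  rfl
end Blocks

section DoubleAdjoint
variable {H : Type*} [NormedAddCommGroup H] [InnerProductSpace ℂ H] [CompleteSpace H]

open scoped InnerProductSpace ComplexConjugate

/-- The graph of `N` as a closed submodule of `WithLp 2 (H × H)`. -/
noncomputable def graphL2 (N : H →ₗ.[ℂ] H) : Submodule ℂ (WithLp 2 (H × H)) :=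
  N.graph.comap (WithLp.linearEquiv 2 ℂ (H × H)).toLinearMap

theorem graphL2_isClosed {N : H →ₗ.[ℂ] H} (hNc : N.IsClosed) :
    IsClosed ((graphL2 N : Submodule ℂ (WithLp 2 (H × H))) : Set (WithLp 2 (H × H))) := by
  have : ((graphL2 N : Submodule ℂ (WithLp 2 (H × H))) : Set (WithLp 2 (H × H)))
      = (WithLp.prodContinuousLinearEquiv 2 ℂ H H) ⁻¹' (N.graph : Set (H × H)) := rfl
  rw [this]
  exact hNc.preimage (WithLp.prodContinuousLinearEquiv 2 ℂ H H).continuous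

/-- Core lemma: if `N` is closed and densely defined and `⟪w, q⟫ = ⟪u, N† q⟫` for all
`q` in the domain of the adjoint, then `u ∈ dom N` and `N u = w`.  (This is the nontrivial
inclusion in `N†† = N`.) -/
theorem mem_domain_of_forall_adjoint (N : H →ₗ.[ℂ] H) (hNd : Dense (N.domain : Set H))
    (hNc : N.IsClosed) {u w : H}
    (h : ∀ q : N.adjoint.domain, ⟪w, (q : H)⟫_ℂ = ⟪u, N.adjoint q⟫_ℂ) :
    ∃ hu : u ∈ N.domain, N ⟨u, hu⟩ = w := by
  have key : (WithLp.equiv 2 (H × H)).symm (u, w) ∈ (graphL2 N)ᗮᗮ := by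
    rw [Submodule.mem_orthogonal]
    intro v hv
    set a := (WithLp.equiv 2 (H × H) v).1 with ha
    set b := (WithLp.equiv 2 (H × H) v).2 with hb
    have hvab : ∀ x : N.domain, ⟪(x : H), a⟫_ℂ + ⟪N x, b⟫_ℂ = 0 := by
      intro x
      have hgm : (WithLp.equiv 2 (H × H)).symm ((x : H), N x) ∈ graphL2 N := N.mem_graph x
      have := (Submodule.mem_orthogonal _ _).mp hv _ hgm
      simpa [ha, hb] using this
    have hvab' : ∀ x : N.domain, ⟪a, (x : H)⟫_ℂ + ⟪b, (N x : H)⟫_ℂ = 0 := by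
      intro x
      have h0 := congrArg (starRingEnd ℂ) (hvab x)
      simpa [inner_conj_symm] using h0
    have hbmem : b ∈ N.adjoint.domain := by
      apply LinearPMap.mem_adjoint_domain_of_exists
      refine ⟨-a, fun x => ?_⟩
      rw [inner_neg_left]
      linear_combination -hvab' x
    have hNb : N.adjoint ⟨b, hbmem⟩ = -a := by
      apply LinearPMap.adjoint_apply_eq hNd
      intro x
      rw [inner_neg_left]
      linear_combination -hvab' x
    have hwq := h ⟨b, hbmem⟩
    rw [hNb, inner_neg_right] at hwq
    have : ⟪(WithLp.equiv 2 (H × H)).symm (u, w), v⟫_ℂ = 0 := by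
      rw [WithLp.prod_inner_apply]
      show ⟪u, a⟫_ℂ + ⟪w, b⟫_ℂ = 0
      rw [hwq]; ring
    rw [← inner_conj_symm, this, _root_.map_zero]
  rw [(graphL2 N).orthogonal_orthogonal_eq_closure,
    IsClosed.submodule_topologicalClosure_eq (graphL2_isClosed hNc)] at key
  have : (u, w) ∈ N.graph := key
  rw [LinearPMap.mem_graph_iff] at this
  obtain ⟨x, hx1, hx2⟩ := this
  have hx1' : (x : H) = u := hx1
  have hx2' : N x = w := hx2
  refine ⟨hx1' ▸ x.2, ?_⟩
  have hxx : (⟨u, hx1' ▸ x.2⟩ : N.domain) = x := Subtype.ext hx1'.symm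
  rw [hxx, hx2']

/-- A closed densely defined operator has densely defined adjoint. -/
theorem dense_adjoint_domain (N : H →ₗ.[ℂ] H) (hNd : Dense (N.domain : Set H))
    (hNc : N.IsClosed) : Dense (N.adjoint.domain : Set H) := by
  rw [Submodule.dense_iff_topologicalClosure_eq_top,
    Submodule.topologicalClosure_eq_top_iff]
  rw [Submodule.eq_bot_iff]
  intro v hv
  rw [Submodule.mem_orthogonal] at hv
  obtain ⟨h0, hN0⟩ := mem_domain_of_forall_adjoint N hNd hNc (u := 0) (w := v)
    (fun q => by rw [inner_zero_left, ← inner_conj_symm, hv q q.2, _root_.map_zero])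
  rw [← hN0]
  have h00 : (⟨0, h0⟩ : N.domain) = 0 := rfl
  rw [h00, N.map_zero]
end DoubleAdjoint

section Main
variable {H : Type*} [NormedAddCommGroup H] [InnerProductSpace ℂ H] [CompleteSpace H]

open scoped InnerProductSpace ComplexConjugate

theorem pcomp_mono_left {K : Type*} [NormedAddCommGroup K] [InnerProductSpace ℂ K]
    {S S' A : K →ₗ.[ℂ] K} (hS : S ≤ S') : S.pcomp A ≤ S'.pcomp A := by
  refine ⟨fun x hx => ?_, fun x y hxy => ?_⟩
  · rw [pcomp_domain_mem] at hx ⊢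
    obtain ⟨hxA, hAx⟩ := hx
    exact ⟨hxA, hS.1 hAx⟩
  · obtain ⟨hxA, hAx⟩ := pcomp_domain_mem.mp x.2
    have hyx : (y : K) = (x : K) := hxy.symm
    have hy2 : (x : K) ∈ (S'.pcomp A).domain := hyx ▸ y.2
    have : (S'.pcomp A) y = (S'.pcomp A) ⟨(x : K), hy2⟩ := by congr 1; exact Subtype.ext hyx
    rw [this, pcomp_apply hxA hAx, pcomp_apply hxA (hS.1 hAx)]
    exact hS.2 rfl

theorem pdiag_dense {N M : H →ₗ.[ℂ] H} (hN : Dense (N.domain : Set H))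
    (hM : Dense (M.domain : Set H)) :
    Dense ((pdiag N M).domain : Set (WithLp 2 (H × H))) := by
  have hset : ((pdiag N M).domain : Set (WithLp 2 (H × H)))
      = (WithLp.prodContinuousLinearEquiv 2 ℂ H H) ⁻¹'
        ((N.domain : Set H) ×ˢ (M.domain : Set H)) := rfl
  have himg : (WithLp.prodContinuousLinearEquiv 2 ℂ H H) ⁻¹'
        ((N.domain : Set H) ×ˢ (M.domain : Set H))
      = (WithLp.prodContinuousLinearEquiv 2 ℂ H H).symm ''
        ((N.domain : Set H) ×ˢ (M.domain : Set H)) := by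
    ext z
    simp only [Set.mem_preimage, Set.mem_image]
    constructor
    · intro hz
      exact ⟨_, hz, (WithLp.prodContinuousLinearEquiv 2 ℂ H H).symm_apply_apply z⟩
    · rintro ⟨y, hy, rfl⟩
      simpa using hy
  rw [hset, himg]
  exact ((WithLp.prodContinuousLinearEquiv 2 ℂ H H).symm.surjective.denseRange).dense_image
    (WithLp.prodContinuousLinearEquiv 2 ℂ H H).symm.continuous (hN.prod hM)

theorem inner_flip_adjoint {N : H →ₗ.[ℂ] H} (hNd : Dense (N.domain : Set H))
    (p : N.domain) (q : N.adjoint.domain) :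
    ⟪(N p : H), (q : H)⟫_ℂ = ⟪(p : H), N.adjoint q⟫_ℂ := by
  rw [← inner_conj_symm, ← (LinearPMap.adjoint_isFormalAdjoint hNd) q p, inner_conj_symm]

theorem pdiag_swap_le_adjoint {N : H →ₗ.[ℂ] H} (hNd : Dense (N.domain : Set H))
    (hNc : N.IsClosed) :
    pdiag N.adjoint N ≤ (pdiag N N.adjoint).adjoint := by
  have hdense : Dense ((pdiag N N.adjoint).domain : Set (WithLp 2 (H × H))) :=
    pdiag_dense hNd (dense_adjoint_domain N hNd hNc)
  refine LinearPMap.IsFormalAdjoint.le_adjoint hdense ?_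
  intro x y
  rw [pdiag_apply x.2, pdiag_apply y.2, WithLp.prod_inner_apply, WithLp.prod_inner_apply]
  exact congrArg₂ (· + ·)
    (inner_flip_adjoint hNd ⟨_, x.2.1⟩ ⟨_, y.2.1⟩)
    ((LinearPMap.adjoint_isFormalAdjoint hNd) ⟨_, x.2.2⟩ ⟨_, y.2.2⟩)

end Main


open scoped InnerProductSpace ComplexConjugate

theorem inner_symm_pair {H : Type*} [NormedAddCommGroup H] [InnerProductSpace ℂ H]
    (a b c d : H) :
    ⟪(WithLp.equiv 2 (H × H)).symm (a, b), (WithLp.equiv 2 (H × H)).symm (c, d)⟫_ℂ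
      = ⟪a, c⟫_ℂ + ⟪b, d⟫_ℂ := rfl

/-- Let `T` be a closed operator and `N` a normal operator, `A` the block operator
`(x, y) ↦ (0, T x)` on `dom T ⊕ H` and `Ñ = diag(N, N*)` on `dom N ⊕ dom N*`.
Then `T N ⊆ N T` if and only if `A Ñ ⊆ Ñ* A`. -/
theorem pblock_pdiag_comm_iff (T N : H →ₗ.[ℂ] H)
    (hTc : T.IsClosed) (hTd : Dense (T.domain : Set H)) (hN : N.IsNormalOp) :
    T.pcomp N ≤ N.pcomp T ↔
      (pblockLL T).pcomp (pdiag N N.adjoint) ≤ (pdiag N N.adjoint).adjoint.pcomp (pblockLL T) := by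
  obtain ⟨hNd, hNc, -⟩ := hN
  have hdense : Dense ((pdiag N N.adjoint).domain : Set (WithLp 2 (H × H))) :=
    pdiag_dense hNd (dense_adjoint_domain N hNd hNc)
  constructor
  · intro h
    refine le_trans ?_ (pcomp_mono_left (pdiag_swap_le_adjoint hNd hNc))
    refine ⟨fun z hz => ?_, fun z w hzw => ?_⟩
    · obtain ⟨hzN, hNz⟩ := pcomp_domain_mem.mp hz
      have hz1 : (WithLp.equiv 2 (H × H) z).1 ∈ N.domain := hzN.1
      have hNz1 : (N ⟨_, hz1⟩ : H) ∈ T.domain := pblockLL_domain_mem.mp hNz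
      obtain ⟨hz1T, hTz1⟩ := pcomp_domain_mem.mp (h.1 (pcomp_domain_mem.mpr ⟨hz1, hNz1⟩))
      refine pcomp_domain_mem.mpr ⟨pblockLL_domain_mem.mpr hz1T, ?_⟩
      exact pdiag_domain_mem.mpr ⟨N.adjoint.domain.zero_mem, hTz1⟩
    · -- value equality for the first inequality
      obtain ⟨hzN, hNz⟩ := pcomp_domain_mem.mp z.2
      have hz1 : (WithLp.equiv 2 (H × H) (z : WithLp 2 (H × H))).1 ∈ N.domain := hzN.1
      have hNz1 : (N ⟨_, hz1⟩ : H) ∈ T.domain := pblockLL_domain_mem.mp hNz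
      obtain ⟨hz1T, hTz1⟩ := pcomp_domain_mem.mp (h.1 (pcomp_domain_mem.mpr ⟨hz1, hNz1⟩))
      have hval : (T ⟨(N ⟨_, hz1⟩ : H), hNz1⟩ : H) = N ⟨(T ⟨_, hz1T⟩ : H), hTz1⟩ := by
        have h2 := h.2 (x := ⟨_, pcomp_domain_mem.mpr ⟨hz1, hNz1⟩⟩)
          (y := ⟨_, h.1 (pcomp_domain_mem.mpr ⟨hz1, hNz1⟩)⟩) rfl
        rwa [pcomp_apply hz1 hNz1, pcomp_apply hz1T hTz1] at h2
      have hwz : (w : WithLp 2 (H × H)) = (z : WithLp 2 (H × H)) := hzw.symm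
      have hw2 : (z : WithLp 2 (H × H)) ∈ ((pdiag N.adjoint N).pcomp (pblockLL T)).domain :=
        hwz ▸ w.2
      have hrw : ((pdiag N.adjoint N).pcomp (pblockLL T)) w
          = ((pdiag N.adjoint N).pcomp (pblockLL T)) ⟨_, hw2⟩ := by
        congr 1; exact Subtype.ext hwz
      obtain ⟨hwA, hAw⟩ := pcomp_domain_mem.mp hw2
      rw [hrw, pcomp_apply hzN hNz, pcomp_apply hwA hAw]
      have hL : (pblockLL T) ⟨(pdiag N N.adjoint) ⟨_, hzN⟩, hNz⟩
          = (WithLp.equiv 2 (H × H)).symm (0, T ⟨(N ⟨_, hz1⟩ : H), hNz1⟩) :=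
        pblockLL_apply hNz
      have hR : (pdiag N.adjoint N) ⟨(pblockLL T) ⟨_, hwA⟩, hAw⟩
          = (WithLp.equiv 2 (H × H)).symm
            (N.adjoint ⟨0, N.adjoint.domain.zero_mem⟩, N ⟨(T ⟨_, hz1T⟩ : H), hTz1⟩) :=
        pdiag_apply hAw
      rw [hL, hR]
      have h0 : N.adjoint ⟨0, N.adjoint.domain.zero_mem⟩ = 0 := by
        have : (⟨0, N.adjoint.domain.zero_mem⟩ : N.adjoint.domain) = 0 := rfl
        rw [this, N.adjoint.map_zero]
      rw [h0, hval]
  · intro h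
    have key : ∀ (x : H) (hx : x ∈ N.domain) (hTx : (N ⟨x, hx⟩ : H) ∈ T.domain),
        ∃ (h1 : x ∈ T.domain) (h2 : (T ⟨x, h1⟩ : H) ∈ N.domain),
          N ⟨(T ⟨x, h1⟩ : H), h2⟩ = T ⟨(N ⟨x, hx⟩ : H), hTx⟩ := by
      intro x hx hTx
      set z : WithLp 2 (H × H) := (WithLp.equiv 2 (H × H)).symm (x, 0) with hzdef
      have hzN : z ∈ (pdiag N N.adjoint).domain := ⟨hx, N.adjoint.domain.zero_mem⟩
      have hNz : (pdiag N N.adjoint) ⟨z, hzN⟩ ∈ (pblockLL T).domain :=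
        pblockLL_domain_mem.mpr hTx
      have hzdom : z ∈ ((pblockLL T).pcomp (pdiag N N.adjoint)).domain :=
        pcomp_domain_mem.mpr ⟨hzN, hNz⟩
      obtain ⟨hzA, hAz⟩ := pcomp_domain_mem.mp (h.1 hzdom)
      have h1 : x ∈ T.domain := pblockLL_domain_mem.mp hzA
      have hval : (pdiag N N.adjoint).adjoint ⟨(pblockLL T) ⟨z, hzA⟩, hAz⟩
          = (WithLp.equiv 2 (H × H)).symm (0, T ⟨(N ⟨x, hx⟩ : H), hTx⟩) := by
        have h2 := h.2 (x := ⟨z, hzdom⟩) (y := ⟨z, h.1 hzdom⟩) rfl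
        rw [pcomp_apply hzN hNz, pcomp_apply hzA hAz] at h2
        rw [← h2]
        exact pblockLL_apply hNz
      have hq : ∀ q : N.adjoint.domain,
          ⟪(T ⟨(N ⟨x, hx⟩ : H), hTx⟩ : H), (q : H)⟫_ℂ
            = ⟪(T ⟨x, h1⟩ : H), (N.adjoint q : H)⟫_ℂ := by
        intro q
        have hy : ((WithLp.equiv 2 (H × H)).symm ((0 : H), (q : H)))
            ∈ (pdiag N N.adjoint).domain := ⟨N.domain.zero_mem, q.2⟩
        have hfa := LinearPMap.adjoint_isFormalAdjoint hdense
          ⟨(pblockLL T) ⟨z, hzA⟩, hAz⟩ ⟨_, hy⟩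
        rw [hval] at hfa
        have hfa' : ⟪(0 : H), (0 : H)⟫_ℂ + ⟪(T ⟨(N ⟨x, hx⟩ : H), hTx⟩ : H), (q : H)⟫_ℂ
            = ⟪(0 : H), (N ⟨0, N.domain.zero_mem⟩ : H)⟫_ℂ
              + ⟪(T ⟨x, h1⟩ : H), (N.adjoint q : H)⟫_ℂ := hfa
        simpa using hfa'
      obtain ⟨h2, hN2⟩ := mem_domain_of_forall_adjoint N hNd hNc hq
      exact ⟨h1, h2, hN2⟩
    refine ⟨fun x hx => ?_, fun x y hxy => ?_⟩
    · obtain ⟨hxN, hNxT⟩ := pcomp_domain_mem.mp hx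
      obtain ⟨h1, h2, -⟩ := key x hxN hNxT
      exact pcomp_domain_mem.mpr ⟨h1, h2⟩
    · obtain ⟨hxN, hNxT⟩ := pcomp_domain_mem.mp x.2
      obtain ⟨h1, h2, hkey⟩ := key _ hxN hNxT
      have hyx : (y : H) = (x : H) := hxy.symm
      have hy2 : (x : H) ∈ (N.pcomp T).domain := hyx ▸ y.2
      have hrw : (N.pcomp T) y = (N.pcomp T) ⟨(x : H), hy2⟩ := by
        congr 1; exact Subtype.ext hyx
      rw [hrw, pcomp_apply hxN hNxT, pcomp_apply h1 h2]
      exact hkey.symm
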